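/- For every integer j ≥ 1, the rational number d_j := 2^{4j+1}·((3j)!)^2·(j!)^2 / (3·((2j)!)^4) is a 2-adic integer, i.e., its 2-adic valuation is nonnegative (in fact positive). -/

import Mathlib

private lemma val_fact (n : ℕ) :
    padicValNat 2 (Nat.factorial n) = n - (Nat.digits 2 n).sum := by
  have := sub_one_mul_padicValNat_factorial (p := 2) (hp := ⟨Nat.prime_two⟩) n
  simpa using this

private lemma sum_two_mul (j : ℕ) (hj : 1 ≤ j) :
    (Nat.digits 2 (2 * j)).sum = (Nat.digits 2 j).sum := by
  rw [Nat.digits_def' (by norm_num : (1:ℕ) < 2) (by omega)]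
  simp [Nat.mul_div_cancel_left j (by norm_num : 0 < 2), Nat.mul_mod_right]

private lemma three_mul_lt_pow (j : ℕ) : 3 * j < 2 ^ (2 * j) ∨ j = 0 := by
  induction j with
  | zero => right; rfl
  | succ n ih =>
    left
    rcases Nat.eq_zero_or_pos n with rfl | hn
    · norm_num
    · have h : 3 * n < 2 ^ (2 * n) := ih.resolve_right (by omega)
      have h4 : 4 ≤ 2 ^ (2 * n) := by
        calc 4 = 2 ^ 2 := rfl
        _ ≤ 2 ^ (2 * n) := Nat.pow_le_pow_right (by norm_num) (by omega)
      have h5 : 2 ^ (2 * (n + 1)) = 4 * 2 ^ (2 * n) := by ring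
      omega

private lemma sum_three_mul_le (j : ℕ) (hj : 1 ≤ j) :
    (Nat.digits 2 (3 * j)).sum ≤ 2 * j := by
  have h1 : (Nat.digits 2 (3 * j)).sum ≤ (Nat.digits 2 (3 * j)).length • 1 :=
    List.sum_le_card_nsmul _ 1 fun x hx =>
      Nat.le_of_lt_succ (Nat.digits_lt_base (by norm_num) hx)
  simp only [smul_eq_mul, mul_one] at h1
  have h2 : (Nat.digits 2 (3 * j)).length = Nat.log 2 (3 * j) + 1 :=
    Nat.digits_len 2 (3 * j) (by norm_num) (by omega)
  have h3 : 3 * j < 2 ^ (2 * j) := (three_mul_lt_pow j).resolve_right (by omega)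
  have h4 : Nat.log 2 (3 * j) < 2 * j := Nat.log_lt_of_lt_pow (by omega) h3
  omega

open Nat in
theorem diagonal_entry_is_two_adic_integer (j : ℕ) (hj : 1 ≤ j) :
    0 < padicValRat 2 ((2 ^ (4 * j + 1) * ((3 * j)! : ℚ) ^ 2 * (j ! : ℚ) ^ 2) /
        (3 * ((2 * j)! : ℚ) ^ 4)) := by
  haveI : Fact (Nat.Prime 2) := ⟨Nat.prime_two⟩
  set A : ℕ := 2 ^ (4 * j + 1) * ((3 * j)!) ^ 2 * (j !) ^ 2 with hA
  set B : ℕ := 3 * ((2 * j)!) ^ 4 with hB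
  have hAq : (2 ^ (4 * j + 1) * ((3 * j)! : ℚ) ^ 2 * (j ! : ℚ) ^ 2) = (A : ℚ) := by
    rw [hA]; push_cast; ring
  have hBq : (3 * ((2 * j)! : ℚ) ^ 4) = (B : ℚ) := by rw [hB]; push_cast; ring
  have hA0 : A ≠ 0 := by positivity
  have hB0 : B ≠ 0 := by positivity
  rw [hAq, hBq, padicValRat.div (p := 2) (by exact_mod_cast hA0) (by exact_mod_cast hB0),
    padicValRat.of_nat, padicValRat.of_nat]
  have hvA : padicValNat 2 A = (4 * j + 1) + 2 * padicValNat 2 ((3 * j)!)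
      + 2 * padicValNat 2 (j !) := by
    rw [hA, padicValNat.mul (by positivity) (by positivity),
      padicValNat.mul (by positivity) (by positivity),
      padicValNat.prime_pow, padicValNat.pow,
      padicValNat.pow]
  have hvB : padicValNat 2 B = 4 * padicValNat 2 ((2 * j)!) := by
    rw [hB, padicValNat.mul (by norm_num) (by positivity),
      padicValNat.pow,
      padicValNat.eq_zero_of_not_dvd (by norm_num), zero_add]
  have e3 := val_fact (3 * j)
  have e2 := val_fact (2 * j)
  have e1 := val_fact j
  have d3 := Nat.digit_sum_le 2 (3 * j)
  have d2 := Nat.digit_sum_le 2 (2 * j)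
  have d1 := Nat.digit_sum_le 2 j
  have hs2 := sum_two_mul j hj
  have hs3 := sum_three_mul_le j hj
  have : padicValNat 2 B < padicValNat 2 A := by omega
  omega
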